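/- For natural numbers m, n, l and any scalar z: \sum_{k=0}^{\min(m,n)} z^k \binom{m}{k} \binom{m-k+l}{n-k} = \sum_{k=0}^{\min(m,n)} (z+1)^k \binom{m}{k} \binom{l}{n-k}. -/

import Mathlib

open Finset

lemma vander_part (m n l i : ℕ) (hi : i ≤ min m n) :
    ∑ j ∈ Finset.range (min m n + 1 - i),
        Nat.choose (m - i) j * Nat.choose l (n - i - j)
      = Nat.choose (m - i + l) (n - i) := by
  rw [Nat.add_choose_eq, Finset.Nat.sum_antidiagonal_eq_sum_range_succ_mk]
  apply Finset.sum_subset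
  · apply Finset.range_subset_range.2; omega
  · intro a ha hna
    simp only [Finset.mem_range] at ha hna
    have : m - i < a := by omega
    rw [Nat.choose_eq_zero_of_lt this, zero_mul]

lemma key_vandermonde (m n l i : ℕ) (hi : i ≤ min m n) :
    ∑ k ∈ Finset.range (min m n + 1),
        Nat.choose k i * Nat.choose m k * Nat.choose l (n - k)
      = Nat.choose m i * Nat.choose (m - i + l) (n - i) := by
  have h1 : ∑ k ∈ Finset.range (min m n + 1),
        Nat.choose k i * Nat.choose m k * Nat.choose l (n - k)
      = ∑ k ∈ Finset.Ico i (min m n + 1),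
        Nat.choose k i * Nat.choose m k * Nat.choose l (n - k) := by
    refine (Finset.sum_subset ?_ ?_).symm
    · intro k hk
      simp only [Finset.mem_Ico] at hk
      exact Finset.mem_range.2 hk.2
    · intro k hk hk'
      simp only [Finset.mem_range] at hk
      simp only [Finset.mem_Ico, not_and, not_lt] at hk'
      have : k < i := by omega
      rw [Nat.choose_eq_zero_of_lt this, zero_mul, zero_mul]
  rw [h1, Finset.sum_Ico_eq_sum_range]
  have h2 : ∀ j ∈ Finset.range (min m n + 1 - i),
      Nat.choose (i + j) i * Nat.choose m (i + j) * Nat.choose l (n - (i + j))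
        = Nat.choose m i * (Nat.choose (m - i) j * Nat.choose l (n - i - j)) := by
    intro j hj
    simp only [Finset.mem_range] at hj
    have hij : i + j ≤ m := by omega
    have := Nat.choose_mul (n := m) (Nat.le_add_right i j)
    rw [mul_comm (Nat.choose (i+j) i), this, Nat.add_sub_cancel_left,
      Nat.sub_add_eq, mul_assoc]
  rw [Finset.sum_congr rfl h2, ← Finset.mul_sum, vander_part m n l i hi]

theorem binomial_shift_identity {R : Type*} [CommRing R] (m n l : ℕ) (z : R) :
    ∑ k ∈ Finset.range (min m n + 1),
        z ^ k * (m.choose k : R) * ((m - k + l).choose (n - k) : R) =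
      ∑ k ∈ Finset.range (min m n + 1),
        (z + 1) ^ k * (m.choose k : R) * (l.choose (n - k) : R) := by
  have hrhs : ∀ k ∈ Finset.range (min m n + 1),
      (z + 1) ^ k * (m.choose k : R) * (l.choose (n - k) : R)
        = ∑ i ∈ Finset.range (min m n + 1),
            z ^ i * ((Nat.choose k i * Nat.choose m k * Nat.choose l (n - k) : ℕ) : R) := by
    intro k hk
    simp only [Finset.mem_range] at hk
    have hsub : Finset.range (k + 1) ⊆ Finset.range (min m n + 1) :=
      Finset.range_subset_range.2 (by omega)
    have e1 : ∑ i ∈ Finset.range (k + 1),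
          z ^ i * ((Nat.choose k i * Nat.choose m k * Nat.choose l (n - k) : ℕ) : R)
        = ∑ i ∈ Finset.range (min m n + 1),
          z ^ i * ((Nat.choose k i * Nat.choose m k * Nat.choose l (n - k) : ℕ) : R) := by
      refine Finset.sum_subset hsub fun i hi hi' => ?_
      simp only [Finset.mem_range, not_lt] at hi hi'
      rw [Nat.choose_eq_zero_of_lt (by omega)]
      simp
    rw [← e1, add_pow]
    simp only [one_pow, mul_one]
    rw [Finset.sum_mul, Finset.sum_mul]
    refine Finset.sum_congr rfl fun i _ => ?_
    push_cast
    ring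
  rw [Finset.sum_congr rfl hrhs, Finset.sum_comm]
  refine Finset.sum_congr rfl fun i hi => ?_
  simp only [Finset.mem_range] at hi
  rw [← Finset.mul_sum, ← Nat.cast_sum, key_vandermonde m n l i (by omega)]
  push_cast
  ring
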